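/- Let k be a field of characteristic not 2 and α ∈ k^×. If α is a sum of n squares in k^× (n ≥ 1), then in GW(k), 2^n⟨1⟩ = 2^{n-1}⟨2,2α⟩, where ⟨2,2α⟩ = ⟨2⟩ + ⟨2α⟩. -/

import Mathlib

/-- The relations ideal defining the Grothendieck–Witt ring of a field `k`
(characteristic ≠ 2) by its standard presentation: generators `⟨a⟩` for
`a ∈ kˣ` (multiplicative via the group algebra), with relations
`⟨a²⟩ = 1` and the chain relation `⟨a⟩ + ⟨b⟩ = ⟨a+b⟩ + ⟨(a+b)ab⟩` when `a + b ≠ 0`. -/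
noncomputable def GWIdeal (k : Type) [Field k] : Ideal (MonoidAlgebra ℤ kˣ) :=
  Ideal.span { x | (∃ a : kˣ, x = MonoidAlgebra.of ℤ kˣ (a * a) - 1) ∨
    (∃ a b c : kˣ, ((a : k) + (b : k) = (c : k)) ∧
      x = MonoidAlgebra.of ℤ kˣ a + MonoidAlgebra.of ℤ kˣ b
        - MonoidAlgebra.of ℤ kˣ c - MonoidAlgebra.of ℤ kˣ (c * a * b)) }

/-- The Grothendieck–Witt ring of a field `k` of characteristic ≠ 2. -/
def GW (k : Type) [Field k] : Type := MonoidAlgebra ℤ kˣ ⧸ GWIdeal k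

noncomputable instance (k : Type) [Field k] : CommRing (GW k) :=
  Ideal.Quotient.commRing (GWIdeal k)

/-- The class `⟨a⟩` of the one-dimensional quadratic form `x ↦ a x²` in `GW k`. -/
noncomputable def GWform (k : Type) [Field k] (a : kˣ) : GW k :=
  Ideal.Quotient.mk (GWIdeal k) (MonoidAlgebra.of ℤ kˣ a)

section GWaux

variable {k : Type} [Field k]

lemma GWform_mul (a b : kˣ) : GWform k (a * b) = GWform k a * GWform k b := by
  unfold GWform
  rw [map_mul, map_mul]
  rfl

lemma GWform_sq (a : kˣ) : GWform k (a * a) = 1 := by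
  have h : (Ideal.Quotient.mk (GWIdeal k)) (MonoidAlgebra.of ℤ kˣ (a * a))
      = Ideal.Quotient.mk (GWIdeal k) 1 :=
    Ideal.Quotient.eq.mpr (Ideal.subset_span (Or.inl ⟨a, rfl⟩))
  rw [map_one] at h
  exact h

lemma GWform_one : GWform k 1 = 1 := by
  simpa using GWform_sq (k := k) 1

lemma GWform_chain (a b c : kˣ) (h : (a : k) + (b : k) = (c : k)) :
    GWform k a + GWform k b = GWform k c + GWform k (c * a * b) := by
  have mem : (MonoidAlgebra.of ℤ kˣ a + MonoidAlgebra.of ℤ kˣ b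
        - MonoidAlgebra.of ℤ kˣ c - MonoidAlgebra.of ℤ kˣ (c * a * b)) ∈ GWIdeal k :=
    Ideal.subset_span (Or.inr ⟨a, b, c, h, rfl⟩)
  have h2 : Ideal.Quotient.mk (GWIdeal k) (MonoidAlgebra.of ℤ kˣ a + MonoidAlgebra.of ℤ kˣ b)
      = Ideal.Quotient.mk (GWIdeal k)
        (MonoidAlgebra.of ℤ kˣ c + MonoidAlgebra.of ℤ kˣ (c * a * b)) :=
    Ideal.Quotient.eq.mpr (by convert mem using 1; ring)
  rw [map_add, map_add] at h2
  exact h2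

lemma GW_key (n : ℕ) (α : kˣ) (x : Fin (n + 1) → k) (hx : (α : k) = ∑ i, x i ^ 2) :
    (2 ^ n : GW k) * GWform k α = 2 ^ n := by
  induction n generalizing α with
  | zero =>
    simp only [Fin.sum_univ_succ, Fin.sum_univ_zero, add_zero] at hx
    have hx0 : x 0 ≠ 0 := fun h => α.ne_zero (by simp [hx, h])
    have hα : α = Units.mk0 (x 0) hx0 * Units.mk0 (x 0) hx0 := by
      ext; simp [hx, sq]
    rw [hα, GWform_sq]; ring
  | succ n ih =>
    rw [Fin.sum_univ_castSucc] at hx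
    by_cases hlast : x (Fin.last _) = 0
    · have h' : (α : k) = ∑ i : Fin (n + 1), (fun j => x (Fin.castSucc j)) i ^ 2 := by
        simpa [hlast] using hx
      have h := ih α _ h'
      calc (2 ^ (n + 1) : GW k) * GWform k α = 2 * (2 ^ n * GWform k α) := by ring
        _ = 2 ^ (n + 1) := by rw [h]; ring
    · by_cases hβ : (∑ i : Fin (n + 1), x (Fin.castSucc i) ^ 2) = 0
      · have hα' : (α : k) = x (Fin.last _) ^ 2 := by rw [hx, hβ, zero_add]
        have hα : α = Units.mk0 _ hlast * Units.mk0 _ hlast := by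
          ext; simp [hα', sq]
        rw [hα, GWform_sq]; ring
      · set β : kˣ := Units.mk0 _ hβ with hβdef
        set t : kˣ := Units.mk0 _ hlast with htdef
        have hββ : (2 ^ n : GW k) * GWform k β = 2 ^ n :=
          ih β (fun i => x (Fin.castSucc i)) rfl
        have hch := GWform_chain β (t * t) α (by
          simp [hβdef, htdef, hx, sq])
        rw [GWform_sq] at hch
        rw [show α * β * (t * t) = (α * β) * (t * t) by ring, GWform_mul,
          GWform_sq, GWform_mul, mul_one] at hch
        linear_combination (-(2 ^ n : GW k)) * hch + (1 - GWform k α) * hββ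

end GWaux

/-- If `α ∈ kˣ` is a sum of `n ≥ 1` squares in a field `k` of characteristic ≠ 2,
then `2ⁿ⟨1⟩ = 2ⁿ⁻¹⟨2, 2α⟩` in `GW(k)`. -/
theorem stmt3 (k : Type) [Field k] (h2 : (2 : k) ≠ 0) (n : ℕ) (hn : 1 ≤ n) (α : kˣ)
    (hα : ∃ x : Fin n → k, (α : k) = ∑ i, x i ^ 2) :
    (2 ^ n : ℤ) • GWform k 1 =
      (2 ^ (n - 1) : ℤ) •
        (GWform k (Units.mk0 (2 : k) h2) + GWform k (Units.mk0 (2 : k) h2 * α)) := by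
  obtain ⟨m, rfl⟩ : ∃ m, n = m + 1 := ⟨n - 1, (Nat.succ_pred_eq_of_pos hn).symm⟩
  obtain ⟨x, hx⟩ := hα
  have hA : (2 ^ m : GW k) * GWform k α = 2 ^ m := GW_key m α x hx
  set u2 : kˣ := Units.mk0 (2 : k) h2 with hu2
  have hC : GWform k 1 + GWform k 1 = GWform k u2 + GWform k u2 := by
    have := GWform_chain (k := k) 1 1 u2 (by simp [hu2]; norm_num)
    simpa using this
  rw [GWform_one] at hC
  rw [GWform_mul, GWform_one, zsmul_eq_mul, zsmul_eq_mul]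
  push_cast
  linear_combination (2 ^ m : GW k) * hC - GWform k u2 * hA
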